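/- For any Boolean function f on Z_2^n, the nonlinearity satisfies N_f ≤ 2^{n-1} - (1/2)·√(σ_f / 2^n), equivalently σ_f ≤ 2^n (2^n - 2 N_f)^2. -/

import Mathlib

open Finset

/-- `(-1)^{f(x)}` as an integer. -/
def bhat {n : ℕ} (f : (Fin n → ZMod 2) → ZMod 2) (x : Fin n → ZMod 2) : ℤ :=
  (-1) ^ (f x).val

/-- Autocorrelation `Δ_f(α) = ∑_x (-1)^{f(x)} (-1)^{f(x ⊕ α)}`. -/
def autocorr {n : ℕ} (f : (Fin n → ZMod 2) → ZMod 2) (a : Fin n → ZMod 2) : ℤ :=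
  ∑ x : Fin n → ZMod 2, bhat f x * bhat f (x + a)

/-- Sum-of-squares indicator `σ_f`. -/
def sos {n : ℕ} (f : (Fin n → ZMod 2) → ZMod 2) : ℤ :=
  ∑ a : Fin n → ZMod 2, (autocorr f a) ^ 2

/-- Nonlinearity: the minimum Hamming distance from `f` to the affine
functions `x ↦ c·x ⊕ c₀`. -/
def nonlinearity {n : ℕ} (f : (Fin n → ZMod 2) → ZMod 2) : ℕ :=
  Finset.univ.inf' Finset.univ_nonempty
    fun p : (Fin n → ZMod 2) × ZMod 2 =>
      (Finset.univ.filter fun x => f x ≠ (∑ i, p.1 i * x i) + p.2).card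

namespace SosAux

variable {n : ℕ}

abbrev G (n : ℕ) := Fin n → ZMod 2

lemma card_G : Fintype.card (G n) = 2 ^ n := by
  simp [G]

def dotp (c x : G n) : ZMod 2 := ∑ i, c i * x i

def chi (c x : G n) : ℤ := (-1) ^ (dotp c x).val

lemma neg_one_pow_add (a b : ZMod 2) :
    ((-1 : ℤ)) ^ (a + b).val = (-1) ^ a.val * (-1) ^ b.val := by
  revert a b; decide

lemma dotp_add_right (c x y : G n) : dotp c (x + y) = dotp c x + dotp c y := by
  unfold dotp
  rw [← Finset.sum_add_distrib]
  exact Finset.sum_congr rfl fun i _ => by simp [mul_add]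

lemma dotp_add_left (c d x : G n) : dotp (c + d) x = dotp c x + dotp d x := by
  unfold dotp
  rw [← Finset.sum_add_distrib]
  exact Finset.sum_congr rfl fun i _ => by simp [add_mul]

lemma chi_add_right (c x y : G n) : chi c (x + y) = chi c x * chi c y := by
  unfold chi
  rw [dotp_add_right, neg_one_pow_add]

lemma chi_add_left (c d x : G n) : chi (c + d) x = chi c x * chi d x := by
  unfold chi
  rw [dotp_add_left, neg_one_pow_add]

lemma chi_zero_right (c : G n) : chi c 0 = 1 := by
  unfold chi dotp
  simp

lemma self_add (x : G n) : x + x = 0 := by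
  funext i
  have : ∀ a : ZMod 2, a + a = 0 := by decide
  exact this (x i)

lemma sum_chi_ne (y : G n) (hy : y ≠ 0) : ∑ c : G n, chi c y = 0 := by
  obtain ⟨j, hj⟩ : ∃ j, y j ≠ 0 := by
    by_contra h
    push_neg at h
    exact hy (funext fun j => h j)
  have hyj : y j = 1 := by
    revert hj
    generalize y j = a
    revert a; decide
  set e : G n := Pi.single j (1 : ZMod 2) with he
  have hchie : chi e y = -1 := by
    unfold chi dotp
    have h1 : ∑ i, e i * y i = y j := by
      rw [Finset.sum_eq_single j]
      · simp [he]
      · intro b _ hb; simp [he, Pi.single_eq_of_ne hb]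
      · simp
    rw [h1, hyj]
    decide
  have key : ∀ c : G n, chi (c + e) y = - chi c y := by
    intro c
    rw [chi_add_left, hchie]
    ring
  have hre : ∑ c : G n, chi (c + e) y = ∑ c : G n, chi c y :=
    Fintype.sum_equiv (Equiv.addRight e) _ _ (fun c => rfl)
  have h2 : ∑ c : G n, chi (c + e) y = - ∑ c : G n, chi c y := by
    simp_rw [key]
    exact Finset.sum_neg_distrib (fun c => chi c y)
  rw [h2] at hre
  linarith

lemma sum_chi (y : G n) : ∑ c : G n, chi c y = if y = 0 then 2 ^ n else 0 := by
  by_cases h : y = 0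
  · simp [h, chi_zero_right, card_G]
  · simp [h, sum_chi_ne y h]

lemma parseval (g : G n → ℤ) :
    ∑ c : G n, (∑ a : G n, g a * chi c a) ^ 2 = 2 ^ n * ∑ a : G n, (g a) ^ 2 := by
  have expand : ∀ c : G n, (∑ a : G n, g a * chi c a) ^ 2
      = ∑ a : G n, ∑ b : G n, g a * g b * (chi c a * chi c b) := by
    intro c
    rw [sq, Finset.sum_mul_sum]
    exact Finset.sum_congr rfl fun a _ => Finset.sum_congr rfl fun b _ => by ring
  simp_rw [expand]
  rw [Finset.sum_comm]
  have inner : ∀ a : G n, ∑ c : G n, ∑ b : G n, g a * g b * (chi c a * chi c b)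
      = 2 ^ n * (g a) ^ 2 := by
    intro a
    rw [Finset.sum_comm]
    have hb : ∀ b : G n, ∑ c : G n, g a * g b * (chi c a * chi c b)
        = g a * g b * (if a + b = 0 then (2:ℤ) ^ n else 0) := by
      intro b
      rw [← Finset.mul_sum]
      congr 1
      calc ∑ c : G n, chi c a * chi c b = ∑ c : G n, chi c (a + b) := by
            simp_rw [chi_add_right]
        _ = _ := sum_chi (a + b)
    simp_rw [hb]
    have haeq : ∀ b : G n, (a + b = 0) ↔ (b = a) := by
      intro b
      constructor
      · intro h
        have := congrArg (a + ·) h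
        simpa [← add_assoc, self_add] using this
      · rintro rfl; exact self_add _
    simp_rw [haeq]
    rw [Finset.sum_eq_single a]
    · split_ifs with h
      · ring
      · exact absurd rfl h
    · intro b _ hb; simp [hb]
    · simp
  simp_rw [inner]
  rw [← Finset.mul_sum]

def W (f : G n → ZMod 2) (c : G n) : ℤ := ∑ x : G n, bhat f x * chi c x

lemma wiener (f : G n → ZMod 2) (c : G n) :
    ∑ a : G n, autocorr f a * chi c a = (W f c) ^ 2 := by
  unfold autocorr
  simp_rw [Finset.sum_mul]
  rw [Finset.sum_comm]
  have hx : ∀ x : G n, ∑ a : G n, bhat f x * bhat f (x + a) * chi c a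
      = ∑ y : G n, (bhat f x * chi c x) * (bhat f y * chi c y) := by
    intro x
    refine Fintype.sum_equiv (Equiv.addLeft x) _ _ (fun a => ?_)
    simp only [Equiv.coe_addLeft]
    have h1 : chi c a = chi c x * chi c (x + a) := by
      rw [← chi_add_right, ← add_assoc, self_add, zero_add]
    rw [h1]; ring
  simp_rw [hx]
  rw [← Finset.sum_mul_sum]
  rw [sq]
  rfl

lemma bhat_sq (f : G n → ZMod 2) (x : G n) : (bhat f x) ^ 2 = 1 := by
  unfold bhat
  rw [← pow_mul, mul_comm, pow_mul]
  simp

lemma sum_W_sq (f : G n → ZMod 2) : ∑ c : G n, (W f c) ^ 2 = 2 ^ n * 2 ^ n := by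
  have := parseval (g := bhat f)
  simp_rw [bhat_sq] at this
  simpa [W, card_G] using this

lemma term_eq (a b : ZMod 2) :
    (-1 : ℤ) ^ a.val * (-1) ^ b.val = 1 - 2 * (if a ≠ b then 1 else 0) := by
  revert a b; decide

lemma W_card (f : G n → ZMod 2) (c : G n) :
    W f c = 2 ^ n - 2 * ((Finset.univ.filter fun x => f x ≠ dotp c x).card : ℤ) := by
  unfold W bhat chi
  have : ∀ x : G n, (-1:ℤ) ^ (f x).val * (-1) ^ (dotp c x).val
      = 1 - 2 * (if f x ≠ dotp c x then 1 else 0) := fun x => term_eq _ _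
  simp_rw [this]
  rw [Finset.sum_sub_distrib]
  rw [← Finset.mul_sum, Finset.sum_boole]
  simp [card_G]

lemma nl_le (f : G n → ZMod 2) (p : G n × ZMod 2) :
    nonlinearity f ≤ (Finset.univ.filter fun x => f x ≠ (∑ i, p.1 i * x i) + p.2).card :=
  Finset.inf'_le _ (Finset.mem_univ p)

lemma d0_eq (f : G n → ZMod 2) (c : G n) :
    (Finset.univ.filter fun x => f x ≠ (∑ i, c i * x i) + (0 : ZMod 2)).card
      = (Finset.univ.filter fun x => f x ≠ dotp c x).card := by
  congr 1
  apply Finset.filter_congr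
  intro x _
  simp [dotp]

lemma d1_eq (f : G n → ZMod 2) (c : G n) :
    (Finset.univ.filter fun x => f x ≠ (∑ i, c i * x i) + (1 : ZMod 2)).card
      = 2 ^ n - (Finset.univ.filter fun x => f x ≠ dotp c x).card := by
  have hiff : ∀ a b : ZMod 2, (a ≠ b + 1) ↔ ¬ (a ≠ b) := by decide
  have : (Finset.univ.filter fun x => f x ≠ (∑ i, c i * x i) + (1 : ZMod 2))
      = Finset.univ.filter fun x => ¬ (f x ≠ dotp c x) := by
    apply Finset.filter_congr
    intro x _
    exact hiff (f x) (dotp c x)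
  rw [this]
  have hsplit := Finset.card_filter_add_card_filter_not
    (s := (Finset.univ : Finset (G n))) (p := fun x => f x ≠ dotp c x)
  rw [Finset.card_univ, card_G] at hsplit
  omega

lemma W_sq_le (f : G n → ZMod 2) (c : G n) :
    (W f c) ^ 2 ≤ ((2:ℤ) ^ n - 2 * (nonlinearity f : ℤ)) ^ 2 := by
  set d0 := (Finset.univ.filter fun x => f x ≠ dotp c x).card with hd0
  have hW := W_card f c
  have h0 : (nonlinearity f : ℤ) ≤ d0 := by
    have := nl_le f (c, 0)
    rw [d0_eq] at this
    exact_mod_cast this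
  have hd0le : (d0 : ℤ) ≤ 2 ^ n := by
    have : d0 ≤ Fintype.card (G n) := Finset.card_filter_le _ _
    rw [card_G] at this
    exact_mod_cast this
  have h1 : (nonlinearity f : ℤ) ≤ 2 ^ n - d0 := by
    have := nl_le f (c, 1)
    rw [d1_eq] at this
    have : (nonlinearity f : ℤ) ≤ ((2 ^ n - d0 : ℕ) : ℤ) := by exact_mod_cast this
    rwa [Nat.cast_sub (by exact_mod_cast hd0le), Nat.cast_pow, Nat.cast_ofNat] at this
  apply sq_le_sq'
  · rw [hW]; linarith
  · rw [hW]; linarith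

end SosAux

open SosAux in
theorem sos_nonlinearity_bound {n : ℕ} (f : (Fin n → ZMod 2) → ZMod 2) :
    sos f ≤ 2 ^ n * ((2 : ℤ) ^ n - 2 * (nonlinearity f : ℤ)) ^ 2 := by
  set M : ℤ := (2:ℤ) ^ n - 2 * (nonlinearity f : ℤ) with hM
  have key : (2:ℤ) ^ n * sos f = ∑ c : G n, (W f c) ^ 4 := by
    have hp := parseval (g := autocorr f)
    simp_rw [wiener f] at hp
    unfold sos
    rw [← hp]
    apply Finset.sum_congr rfl
    intro c _
    ring
  have hbound : ∑ c : G n, (W f c) ^ 4 ≤ M ^ 2 * (2 ^ n * 2 ^ n) := by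
    rw [← sum_W_sq f, Finset.mul_sum]
    apply Finset.sum_le_sum
    intro c _
    have h1 : (W f c) ^ 4 = (W f c) ^ 2 * (W f c) ^ 2 := by ring
    rw [h1]
    exact mul_le_mul_of_nonneg_right (W_sq_le f c) (sq_nonneg _)
  have h2 : (2:ℤ) ^ n * sos f ≤ (2:ℤ) ^ n * (2 ^ n * M ^ 2) := by
    rw [key]
    calc ∑ c : G n, (W f c) ^ 4 ≤ M ^ 2 * (2 ^ n * 2 ^ n) := hbound
      _ = (2:ℤ) ^ n * (2 ^ n * M ^ 2) := by ring
  exact le_of_mul_le_mul_left h2 (by positivity)
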